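/- Let m and n be positive integers with n ≥ 2, and let d be a positive divisor of n. Set g = m·n·(n−1)/2 − n + 1. If m is odd, n ≡ 2 (mod 4), and d is even, then gcd(d, g) = 2; in all other cases gcd(d, g) = 1. -/

import Mathlib

/-- The genus of the complete multigraph `K_n^m`, namely `m·n·(n−1)/2 − n + 1`. -/
def genusZ (m n : ℕ) : ℤ := (m : ℤ) * n * ((n : ℤ) - 1) / 2 - n + 1


lemma int_gcd_add_mul (a b c : ℤ) : Int.gcd a (b + a * c) = Int.gcd a b := by
  apply Nat.dvd_antisymm
  · have h1 : (↑(Int.gcd a (b + a * c)) : ℤ) ∣ b := by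
      have ha : (↑(Int.gcd a (b + a * c)) : ℤ) ∣ a := Int.gcd_dvd_left _ _
      have hb : (↑(Int.gcd a (b + a * c)) : ℤ) ∣ b + a * c := Int.gcd_dvd_right _ _
      have := hb.sub (ha.mul_right c)
      simpa using this
    exact_mod_cast Int.dvd_coe_gcd (Int.gcd_dvd_left _ _) h1
  · have h1 : (↑(Int.gcd a b) : ℤ) ∣ b + a * c :=
      (Int.gcd_dvd_right _ _).add ((Int.gcd_dvd_left _ _).mul_right c)
    exact_mod_cast Int.dvd_coe_gcd (Int.gcd_dvd_left _ _) h1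

/-- For a positive divisor `d` of `n`: if `m` is odd, `n ≡ 2 (mod 4)` and `d` is even,
then `gcd(d, g(m,n)) = 2`; in all other cases `gcd(d, g(m,n)) = 1`. -/
theorem gcd_genus (m n d : ℕ) (hm : 0 < m) (hn : 2 ≤ n) (hd : d ∣ n) (hd0 : 0 < d) :
    Int.gcd (d : ℤ) (genusZ m n) =
      if Odd m ∧ n % 4 = 2 ∧ Even d then 2 else 1 := by
  obtain ⟨k, hk⟩ : ∃ k : ℤ, (n:ℤ) * ((n:ℤ) - 1) = 2 * k := by
    obtain ⟨k, hk⟩ := Int.even_mul_succ_self ((n:ℤ) - 1)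
    exact ⟨k, by linear_combination hk⟩
  have hg : genusZ m n = (m:ℤ) * k - n + 1 := by
    unfold genusZ
    have h2 : (m:ℤ) * n * ((n:ℤ) - 1) = 2 * ((m:ℤ) * k) := by linear_combination (m:ℤ) * hk
    rw [h2, Int.mul_ediv_cancel_left _ two_ne_zero]
  obtain ⟨c, hc⟩ := hd
  rcases Nat.even_or_odd n with hne | hno
  · -- n even
    obtain ⟨q, hh⟩ := hne
    have hh' : n = 2 * q := by omega
    have hkh : k = (q:ℤ) * ((n:ℤ) - 1) := by
      have : (2:ℤ) * k = 2 * ((q:ℤ) * ((n:ℤ) - 1)) := by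
        rw [← hk]; push_cast [hh']; ring
      linarith
    have hgeq : genusZ m n = (1 - (m:ℤ) * q) + (d:ℤ) * ((c:ℤ) * ((m:ℤ) * q - 1)) := by
      rw [hg, hkh]
      have hnc : (n:ℤ) = (d:ℤ) * c := by exact_mod_cast congrArg (Nat.cast : ℕ → ℤ) hc
      linear_combination ((m:ℤ) * q - 1) * hnc
    rw [hgeq, int_gcd_add_mul]
    set E := Int.gcd (d:ℤ) (1 - (m:ℤ) * q) with hE
    have hEd : (E:ℤ) ∣ (d:ℤ) := Int.gcd_dvd_left _ _
    have hEg : (E:ℤ) ∣ 1 - (m:ℤ) * q := Int.gcd_dvd_right _ _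
    have hEdn : E ∣ d := by exact_mod_cast hEd
    have hcop : Nat.Coprime E q := by
      have hp1 : (Nat.gcd E q : ℤ) ∣ 1 := by
        have h1 : (Nat.gcd E q : ℤ) ∣ 1 - (m:ℤ) * q :=
          dvd_trans (Int.natCast_dvd_natCast.mpr (Nat.gcd_dvd_left _ _)) hEg
        have h2 : (Nat.gcd E q : ℤ) ∣ (m:ℤ) * q :=
          Dvd.dvd.mul_left (Int.natCast_dvd_natCast.mpr (Nat.gcd_dvd_right _ _)) _
        have := dvd_add h1 h2
        simpa using this
      have := Int.isUnit_iff.mp (isUnit_of_dvd_one hp1)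
      have hge : Nat.gcd E q = 1 := by omega
      exact hge
    have hE2 : E ∣ 2 := by
      have hEn : E ∣ 2 * q := by
        have : E ∣ n := hEdn.trans ⟨c, hc⟩
        rwa [hh'] at this
      exact (Nat.Coprime.dvd_of_dvd_mul_right hcop hEn)
    by_cases hcond : Odd m ∧ n % 4 = 2 ∧ Even d
    · rw [if_pos hcond]
      obtain ⟨hom, h4, hed⟩ := hcond
      have hodd_h : Odd q := by
        rcases Nat.even_or_odd q with ⟨t, ht⟩ | q'
        · omega
        · exact q'
      have hmh : Odd (m * q) := hom.mul hodd_h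
      obtain ⟨t, ht⟩ := hmh
      have h2g : (2:ℤ) ∣ 1 - (m:ℤ) * q := by
        have : ((m * q : ℕ) : ℤ) = 2 * t + 1 := by exact_mod_cast ht
        push_cast at this
        exact ⟨-t, by linarith⟩
      have h2d : (2:ℤ) ∣ (d:ℤ) := by
        obtain ⟨r, hr⟩ := hed
        exact ⟨r, by push_cast [hr]; ring⟩
      have h2E : 2 ∣ E := by
        have h' : (2:ℤ) ∣ (E:ℤ) := by rw [hE]; exact Int.dvd_coe_gcd h2d h2g
        exact_mod_cast h'
      exact Nat.dvd_antisymm hE2 h2E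
    · rw [if_neg hcond]
      rcases (Nat.dvd_prime Nat.prime_two).mp hE2 with h1 | h2
      · exact h1
      · exfalso
        apply hcond
        rw [h2] at hEd hEg
        have h2g : (2:ℤ) ∣ 1 - (m:ℤ) * q := by exact_mod_cast hEg
        obtain ⟨t, ht⟩ := h2g
        have hmho : Odd ((m:ℤ) * q) := ⟨-t, by linarith⟩
        have hmhn : Odd (m * q) := by
          have : Odd ((m * q : ℕ) : ℤ) := by push_cast; exact hmho
          exact_mod_cast this
        obtain ⟨hom, hoh⟩ := Nat.odd_mul.mp hmhn
        obtain ⟨t1, ht1⟩ := hoh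
        have hdn : 2 ∣ d := by exact_mod_cast hEd
        obtain ⟨r, hr⟩ := hdn
        exact ⟨hom, by omega, ⟨r, by omega⟩⟩
  · -- n odd
    obtain ⟨j, hj⟩ := hno
    have hkj : k = (n:ℤ) * j := by
      have : (2:ℤ) * k = 2 * ((n:ℤ) * j) := by
        rw [← hk]; push_cast [hj]; ring
      linarith
    have hgeq : genusZ m n = 1 + (d:ℤ) * ((c:ℤ) * ((m:ℤ) * j - 1)) := by
      rw [hg, hkj]
      have hnc : (n:ℤ) = (d:ℤ) * c := by exact_mod_cast congrArg (Nat.cast : ℕ → ℤ) hc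
      linear_combination ((m:ℤ) * j - 1) * hnc
    rw [hgeq, int_gcd_add_mul]
    have hone : Int.gcd (d:ℤ) 1 = 1 := by simp [Int.gcd]
    rw [hone]
    rw [if_neg]
    rintro ⟨-, h4, -⟩
    omega
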